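/- For natural numbers p, q ≥ 2, with ξ = 2·cos(π/(p·q)): one has 2·cos(π/p) = eval ξ (P q) and 2·cos(π/q) = eval ξ (P p) (evaluating the integer polynomials P q, P p at ξ via ℤ → ℝ). Consequently every entry of each of the matrices σx, σy, σz lies in the subring Algebra.adjoin ℤ {ξ} of ℝ, i.e. the geometric representation of Δ{p,q} takes values in GL(3, ℤ[ξ_{2pq}]). -/

import Mathlib

open Real Polynomial

/-- Rescaled Chebyshev polynomials of the first kind:
`P 0 = 2`, `P 1 = X`, `P (n+2) = X * P (n+1) - P n`,
satisfying `P n (2 cos θ) = 2 cos (n θ)`. -/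
noncomputable def P : ℕ → Polynomial ℤ
  | 0 => 2
  | 1 => X
  | (n + 2) => X * P (n + 1) - P n

noncomputable def sigmaX (η : ℝ) : Matrix (Fin 3) (Fin 3) ℝ :=
  !![-1, 2*η, 0; 0, 1, 0; 0, 0, 1]

noncomputable def sigmaY (η ζ : ℝ) : Matrix (Fin 3) (Fin 3) ℝ :=
  !![1, 0, 0; 2*η, -1, 2*ζ; 0, 0, 1]

noncomputable def sigmaZ (ζ : ℝ) : Matrix (Fin 3) (Fin 3) ℝ :=
  !![1, 0, 0; 0, 1, 0; 0, 2*ζ, -1]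

lemma P_eval (θ : ℝ) : ∀ n : ℕ, Polynomial.aeval (2 * Real.cos θ) (P n) = 2 * Real.cos (n * θ)
  | 0 => by simp [P, map_ofNat]
  | 1 => by simp [P]
  | (n + 2) => by
    have h1 := P_eval θ (n + 1)
    have h0 := P_eval θ n
    simp only [P, map_sub, map_mul, aeval_X, h1, h0]
    have e2 : ((n : ℝ) + 2) * θ = ((n : ℝ) + 1) * θ + θ := by ring
    have e0 : (n : ℝ) * θ = ((n : ℝ) + 1) * θ - θ := by ring
    push_cast
    rw [e2, e0, Real.cos_add, Real.cos_sub]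
    ring

theorem geometric_representation_in_ring_extension
    (p q : ℕ) (hp : 2 ≤ p) (hq : 2 ≤ q)
    (η ζ : ℝ) (hη : η = Real.cos (π / p)) (hζ : ζ = Real.cos (π / q))
    (ξ : ℝ) (hξ : ξ = 2 * Real.cos (π / (p * q))) :
    2 * Real.cos (π / p) = Polynomial.aeval ξ (P q) ∧
    2 * Real.cos (π / q) = Polynomial.aeval ξ (P p) ∧
    (∀ i j : Fin 3,
      sigmaX η i j ∈ Algebra.adjoin ℤ ({ξ} : Set ℝ) ∧
      sigmaY η ζ i j ∈ Algebra.adjoin ℤ ({ξ} : Set ℝ) ∧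
      sigmaZ ζ i j ∈ Algebra.adjoin ℤ ({ξ} : Set ℝ)) := by
  have hp0 : (p : ℝ) ≠ 0 := by positivity
  have hq0 : (q : ℝ) ≠ 0 := by positivity
  have hq' : Polynomial.aeval ξ (P q) = 2 * Real.cos (π / p) := by
    rw [hξ, P_eval]
    have : (q : ℝ) * (π / (p * q)) = π / p := by field_simp
    rw [this]
  have hp' : Polynomial.aeval ξ (P p) = 2 * Real.cos (π / q) := by
    rw [hξ, P_eval]
    have : (p : ℝ) * (π / (p * q)) = π / q := by field_simp
    rw [this]
  have hξmem : ξ ∈ Algebra.adjoin ℤ ({ξ} : Set ℝ) :=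
    Algebra.subset_adjoin rfl
  have hηmem : 2 * η ∈ Algebra.adjoin ℤ ({ξ} : Set ℝ) := by
    rw [hη, ← hq']
    exact Polynomial.aeval_mem_adjoin_singleton ℤ ξ
  have hζmem : 2 * ζ ∈ Algebra.adjoin ℤ ({ξ} : Set ℝ) := by
    rw [hζ, ← hp']
    exact Polynomial.aeval_mem_adjoin_singleton ℤ ξ
  refine ⟨hq'.symm, hp'.symm, fun i j => ?_⟩
  refine ⟨?_, ?_, ?_⟩ <;> fin_cases i <;> fin_cases j <;>
    simp [sigmaX, sigmaY, sigmaZ] <;>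
    first
      | exact hηmem
      | exact hζmem
      | exact Subalgebra.one_mem _
      | exact Subalgebra.zero_mem _
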